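/- Let m > 0, λ > 0 and p ∈ ℝ³. Then lim_{R→+∞} ( ∫_{{q ∈ ℝ³ : |q| ≤ R}} dq / (G(p,q) + λ) − 4πR ) = −2π² √(ν|p|² + λ). (This is the large-momentum asymptotics underlying the Ter-Martirosyan–Skornyakov boundary condition: the truncated integral of the singular part grows like 4πR with finite remainder −2π²√(ν|p|²+λ).) -/

import Mathlib

open MeasureTheory
open scoped RealInnerProductSpace

noncomputable section

abbrev E3 := EuclideanSpace ℝ (Fin 3)

def mu (m : ℝ) : ℝ := 2 / (m + 1)

def nu (m : ℝ) : ℝ := m * (m + 2) / (m + 1) ^ 2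

def Gker (m : ℝ) (p q : E3) : ℝ := ‖p‖ ^ 2 + ‖q‖ ^ 2 + mu m * ⟪p, q⟫

open Real Filter

lemma gamma52 : Real.Gamma ((3:ℝ)/2 + 1) = 3/4 * Real.sqrt π := by
  rw [Real.Gamma_add_one (by norm_num)]
  have : (3:ℝ)/2 = 1/2 + 1 := by norm_num
  rw [this, Real.Gamma_add_one (by norm_num), Real.Gamma_one_half_eq]
  ring

lemma vol_unit_ball : (volume (Metric.ball (0:E3) 1)).toReal = 4/3 * π := by
  rw [EuclideanSpace.volume_ball]
  simp only [Fintype.card_fin, ENNReal.ofReal_one, one_pow, one_mul, Nat.cast_ofNat]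
  rw [ENNReal.toReal_ofReal (by positivity)]
  rw [gamma52]
  have h1 : Real.sqrt π ^ 3 = π * Real.sqrt π := by
    rw [pow_succ, Real.sq_sqrt Real.pi_pos.le]
  rw [h1]
  have h2 : Real.sqrt π ≠ 0 := by positivity
  field_simp

lemma radial_int (a R : ℝ) (ha : 0 < a) (hR : 0 ≤ R) :
    ∫ q in Metric.closedBall (0:E3) R, 1/(‖q‖^2+a^2)
      = 4*π*(R - a * Real.arctan (R/a)) := by
  set f : ℝ → ℝ := Set.indicator (Set.Icc 0 R) (fun r => 1/(r^2+a^2)) with hf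
  have key : ∀ x : E3, f ‖x‖ = (Metric.closedBall (0:E3) R).indicator
      (fun q => 1/(‖q‖^2+a^2)) x := by
    intro x
    by_cases hx : ‖x‖ ≤ R
    · rw [hf, Set.indicator_of_mem (Set.mem_Icc.mpr ⟨norm_nonneg x, hx⟩),
        Set.indicator_of_mem (by simpa [Metric.mem_closedBall, dist_zero_right] using hx)]
    · rw [hf, Set.indicator_of_notMem (fun h => hx h.2),
        Set.indicator_of_notMem (by simpa [Metric.mem_closedBall, dist_zero_right] using hx)]
  have h0 := integral_fun_norm_addHaar (volume : Measure E3) f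
  simp only [key, integral_indicator (measurableSet_closedBall)] at h0
  rw [h0, finrank_euclideanSpace]
  simp only [Fintype.card_fin, measureReal_def, vol_unit_ball]
  have hind : ∀ y : ℝ, y ^ (3-1) • f y
      = Set.indicator (Set.Icc 0 R) (fun r => r^2/(r^2+a^2)) y := by
    intro y
    by_cases hy : y ∈ Set.Icc 0 R
    · rw [hf, Set.indicator_of_mem hy, Set.indicator_of_mem hy]
      simp [smul_eq_mul]; ring
    · rw [hf, Set.indicator_of_notMem hy, Set.indicator_of_notMem hy, smul_zero]
  simp only [hind]
  rw [setIntegral_indicator measurableSet_Icc]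
  have hset : Set.Ioi (0:ℝ) ∩ Set.Icc 0 R = Set.Ioc 0 R := by
    ext y; simp only [Set.mem_inter_iff, Set.mem_Ioi, Set.mem_Icc, Set.mem_Ioc]
    constructor
    · rintro ⟨h1, _, h3⟩; exact ⟨h1, h3⟩
    · rintro ⟨h1, h2⟩; exact ⟨h1, h1.le, h2⟩
  rw [hset, ← intervalIntegral.integral_of_le hR]
  have hcont : Continuous (fun r : ℝ => r^2/(r^2+a^2)) := by
    apply Continuous.div (by continuity) (by continuity)
    intro x; positivity
  have hder : ∀ r ∈ Set.uIcc (0:ℝ) R,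
      HasDerivAt (fun r : ℝ => r - a * Real.arctan (r/a)) (r^2/(r^2+a^2)) r := by
    intro r _
    have h1 : HasDerivAt (fun r : ℝ => r / a) (1/a) r := by
      simpa using (hasDerivAt_id r).div_const a
    have h2 : HasDerivAt (fun r : ℝ => Real.arctan (r/a))
        ((1/(1+(r/a)^2)) * (1/a)) r := by
      have := (Real.hasDerivAt_arctan (r/a)).comp r h1; exact this
    have h3 : HasDerivAt (fun r : ℝ => r - a * Real.arctan (r/a))
        (1 - a * ((1/(1+(r/a)^2)) * (1/a))) r := (hasDerivAt_id r).sub (h2.const_mul a)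
    convert h3 using 1
    have h4 : (1:ℝ)+(r/a)^2 ≠ 0 := by positivity
    field_simp
    ring
  have hint := intervalIntegral.integral_eq_sub_of_hasDerivAt hder
    (hcont.intervalIntegrable 0 R)
  simp only [hint]
  simp [smul_eq_mul]
  ring

lemma trans_int (g : E3 → ℝ) (c : E3) (R : ℝ) :
    ∫ q in Metric.closedBall (0:E3) R, g (q + c)
      = ∫ q in Metric.closedBall c R, g q := by
  have hmp : MeasurePreserving (fun q : E3 => q + c) volume volume :=
    measurePreserving_add_right volume c
  have he : MeasurableEmbedding (fun q : E3 => q + c) :=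
    (MeasurableEquiv.addRight c).measurableEmbedding
  have := hmp.setIntegral_preimage_emb he g (Metric.closedBall c R)
  rw [← this]
  congr 1
  ext q
  simp [Metric.mem_closedBall, dist_eq_norm]

lemma vol_cb (r : ℝ) (hr : 0 ≤ r) :
    (volume (Metric.closedBall (0:E3) r)).toReal = 4/3*π*r^3 := by
  rw [EuclideanSpace.volume_closedBall]
  simp only [Fintype.card_fin, Nat.cast_ofNat]
  rw [← ENNReal.ofReal_pow hr, ← ENNReal.ofReal_mul (by positivity),
    ENNReal.toReal_ofReal (by positivity)]
  have : Real.Gamma ((3:ℝ)/2 + 1) = 3/4 * Real.sqrt π := by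
    rw [Real.Gamma_add_one (by norm_num)]
    have h : (3:ℝ)/2 = 1/2 + 1 := by norm_num
    rw [h, Real.Gamma_add_one (by norm_num), Real.Gamma_one_half_eq]
    ring
  rw [this]
  have h1 : Real.sqrt π ^ 3 = π * Real.sqrt π := by
    rw [pow_succ, Real.sq_sqrt Real.pi_pos.le]
  rw [h1]
  have h2 : Real.sqrt π ≠ 0 := by positivity
  field_simp

set_option maxHeartbeats 1000000 in
lemma lune_tendsto (a : ℝ) (ha : 0 < a) (c : E3) :
    Tendsto (fun R : ℝ => (∫ q in Metric.closedBall c R, 1/(‖q‖^2+a^2))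
      - ∫ q in Metric.closedBall (0:E3) R, 1/(‖q‖^2+a^2)) atTop (nhds 0) := by
  set t := ‖c‖ with htdef
  have ht : 0 ≤ t := norm_nonneg c
  set g : E3 → ℝ := fun q => 1/(‖q‖^2+a^2) with hgdef
  have hg_cont : Continuous g := by
    apply Continuous.div continuous_const (by continuity)
    intro x; positivity
  have hC : Tendsto (fun R : ℝ => (64*π*t^2)/R) atTop (nhds 0) :=
    Filter.Tendsto.div_atTop tendsto_const_nhds tendsto_id
  apply squeeze_zero_norm' _ hC
  filter_upwards [eventually_ge_atTop (2*t+1)] with R hR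
  have hR1 : 1 ≤ R := by nlinarith
  have hR0 : 0 < R := by linarith
  have hu0 : 0 ≤ R - t := by nlinarith
  have hu2 : R/2 ≤ R - t := by nlinarith
  set S := Metric.closedBall c R with hSdef
  set T := Metric.closedBall (0:E3) R with hTdef
  have hS : MeasurableSet S := measurableSet_closedBall
  have hT : MeasurableSet T := measurableSet_closedBall
  have hgS : IntegrableOn g S := hg_cont.continuousOn.integrableOn_compact
    (isCompact_closedBall c R)
  have hgT : IntegrableOn g T := hg_cont.continuousOn.integrableOn_compact
    (isCompact_closedBall 0 R)
  -- split integrals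
  have hsplitS : (∫ q in S ∩ T, g q) + ∫ q in S \ T, g q = ∫ q in S, g q :=
    integral_inter_add_diff hT hgS
  have hsplitT : (∫ q in T ∩ S, g q) + ∫ q in T \ S, g q = ∫ q in T, g q :=
    integral_inter_add_diff hS hgT
  have hinterc : T ∩ S = S ∩ T := Set.inter_comm T S
  have hDeq : (∫ q in S, g q) - ∫ q in T, g q
      = (∫ q in S \ T, g q) - ∫ q in T \ S, g q := by
    rw [← hsplitS, ← hsplitT, hinterc]; ring
  -- measures
  have hfinS : volume S ≠ ⊤ := (isCompact_closedBall c R).measure_ne_top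
  have hfinT : volume T ≠ ⊤ := (isCompact_closedBall 0 R).measure_ne_top
  have hfinI : volume (S ∩ T) ≠ ⊤ :=
    fun h => hfinS (top_le_iff.mp (h ▸ measure_mono Set.inter_subset_left))
  have hST : volume S = volume T := by
    rw [hSdef, hTdef, Measure.addHaar_closedBall_center]
  have hmdS : volume (S \ T) = volume S - volume (S ∩ T) := by
    rw [← Set.diff_self_inter]
    exact measure_diff Set.inter_subset_left (hS.inter hT).nullMeasurableSet hfinI
  have hmdT : volume (T \ S) = volume T - volume (S ∩ T) := by
    rw [← Set.diff_self_inter, Set.inter_comm T S]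
    exact measure_diff Set.inter_subset_right (hS.inter hT).nullMeasurableSet hfinI
  have hVeq : volume (T \ S) = volume (S \ T) := by rw [hmdS, hmdT, hST]
  set V := (volume (S \ T)).toReal with hVdef
  have hV0 : 0 ≤ V := ENNReal.toReal_nonneg
  -- pointwise bounds on lunes
  set M := 1/((R-t)^2+a^2) with hMdef
  set m0 := 1/((R+t)^2+a^2) with hm0def
  have hMm : m0 ≤ M := by
    apply one_div_le_one_div_of_le (by positivity)
    nlinarith
  have hboundsS : ∀ q ∈ S \ T, m0 ≤ g q ∧ g q ≤ M := by
    rintro q ⟨hqS, hqT⟩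
    have h1 : ‖q - c‖ ≤ R := by
      rw [hSdef, Metric.mem_closedBall, dist_eq_norm] at hqS; exact hqS
    have h2 : R < ‖q‖ := by
      rw [hTdef, Metric.mem_closedBall, dist_zero_right, not_le] at hqT; exact hqT
    have h3 : ‖q‖ ≤ R + t := by
      calc ‖q‖ = ‖(q - c) + c‖ := by rw [sub_add_cancel]
      _ ≤ ‖q - c‖ + ‖c‖ := norm_add_le _ _
      _ ≤ R + t := by rw [htdef]; linarith
    constructor
    · apply one_div_le_one_div_of_le (by positivity); nlinarith
    · apply one_div_le_one_div_of_le (by positivity); nlinarith [norm_nonneg q]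
  have hboundsT : ∀ q ∈ T \ S, m0 ≤ g q ∧ g q ≤ M := by
    rintro q ⟨hqT, hqS⟩
    have h1 : ‖q‖ ≤ R := by
      rw [hTdef, Metric.mem_closedBall, dist_zero_right] at hqT; exact hqT
    have h2 : R < ‖q - c‖ := by
      rw [hSdef, Metric.mem_closedBall, dist_eq_norm, not_le] at hqS; exact hqS
    have h3 : R - t < ‖q‖ := by
      have : ‖q - c‖ ≤ ‖q‖ + ‖c‖ := norm_sub_le _ _
      rw [← htdef] at this; linarith
    constructor
    · apply one_div_le_one_div_of_le (by positivity); nlinarith [norm_nonneg q]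
    · apply one_div_le_one_div_of_le (by positivity); nlinarith
  -- integral bounds
  have hconstint : ∀ (A : Set E3), volume A ≠ ⊤ → ∀ (b : ℝ),
      IntegrableOn (fun _ => b) A volume := by
    intro A hA b
    exact (integrableOn_const_iff (C := b)).mpr (Or.inr (lt_top_iff_ne_top.mpr hA))
  have hfinSd : volume (S \ T) ≠ ⊤ :=
    fun h => hfinS (top_le_iff.mp (h ▸ measure_mono Set.diff_subset))
  have hfinTd : volume (T \ S) ≠ ⊤ :=
    fun h => hfinT (top_le_iff.mp (h ▸ measure_mono Set.diff_subset))
  have hub1 : ∫ q in S \ T, g q ≤ M * V := by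
    have := setIntegral_mono_on (hgS.mono_set Set.diff_subset)
      (hconstint _ hfinSd M) (hS.diff hT) (fun q hq => (hboundsS q hq).2)
    rwa [setIntegral_const, smul_eq_mul, mul_comm] at this
  have hlb1 : m0 * V ≤ ∫ q in S \ T, g q := by
    have := setIntegral_mono_on (hconstint _ hfinSd m0)
      (hgS.mono_set Set.diff_subset) (hS.diff hT) (fun q hq => (hboundsS q hq).1)
    rwa [setIntegral_const, smul_eq_mul, mul_comm] at this
  have hub2 : ∫ q in T \ S, g q ≤ M * V := by
    have := setIntegral_mono_on (hgT.mono_set Set.diff_subset)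
      (hconstint _ hfinTd M) (hT.diff hS) (fun q hq => (hboundsT q hq).2)
    rwa [setIntegral_const, measureReal_def, hVeq, smul_eq_mul, mul_comm] at this
  have hlb2 : m0 * V ≤ ∫ q in T \ S, g q := by
    have := setIntegral_mono_on (hconstint _ hfinTd m0)
      (hgT.mono_set Set.diff_subset) (hT.diff hS) (fun q hq => (hboundsT q hq).1)
    rwa [setIntegral_const, measureReal_def, hVeq, smul_eq_mul, mul_comm] at this
  have habs : |(∫ q in S, g q) - ∫ q in T, g q| ≤ (M - m0) * V := by
    rw [hDeq, abs_le]
    have hexp : (M - m0) * V = M*V - m0*V := by ring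
    constructor
    · rw [neg_le, neg_sub]; linarith
    · linarith
  -- volume bound
  have hsub : Metric.closedBall (0:E3) (R-t) ⊆ S ∩ T := by
    intro q hq
    rw [Metric.mem_closedBall, dist_zero_right] at hq
    constructor
    · rw [hSdef, Metric.mem_closedBall, dist_eq_norm]
      calc ‖q - c‖ ≤ ‖q‖ + ‖c‖ := norm_sub_le _ _
      _ ≤ (R - t) + t := by rw [← htdef]; linarith
      _ = R := by ring
    · rw [hTdef, Metric.mem_closedBall, dist_zero_right]; linarith
  have hVle : V ≤ 4/3*π*(R^3 - (R-t)^3) := by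
    have h1 : V = (volume S).toReal - (volume (S ∩ T)).toReal := by
      rw [hVdef, hmdS, ENNReal.toReal_sub_of_le (measure_mono Set.inter_subset_left) hfinS]
    have h2 : (volume (Metric.closedBall (0:E3) (R-t))).toReal ≤ (volume (S ∩ T)).toReal :=
      (ENNReal.toReal_le_toReal ((isCompact_closedBall _ _).measure_ne_top) hfinI).mpr
        (measure_mono hsub)
    have h3 : (volume S).toReal = 4/3*π*R^3 := by
      rw [hST, hTdef, vol_cb R hR0.le]
    have h4 : (volume (Metric.closedBall (0:E3) (R-t))).toReal = 4/3*π*(R-t)^3 :=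
      vol_cb (R-t) hu0
    rw [h1, h3]
    rw [h4] at h2
    have hring : 4/3*π*(R^3-(R-t)^3) = 4/3*π*R^3 - 4/3*π*(R-t)^3 := by ring
    linarith
  have hMm0 : M - m0 ≤ 16*t/R^3 := by
    have he : M - m0 = 4*R*t/(((R-t)^2+a^2)*((R+t)^2+a^2)) := by
      rw [hMdef, hm0def]
      field_simp
      ring
    have e1 : (R/2)^2 ≤ (R-t)^2 := by nlinarith
    have e2 : R^2 ≤ (R+t)^2 := by nlinarith
    have e3 : (R/2)^2*R^2 ≤ (R-t)^2*(R+t)^2 := mul_le_mul e1 e2 (sq_nonneg R) (sq_nonneg (R-t))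
    have hden : R^4/4 ≤ ((R-t)^2+a^2)*((R+t)^2+a^2) := by
      nlinarith [e3, mul_nonneg (sq_nonneg (R-t)) (sq_nonneg a),
        mul_nonneg (sq_nonneg (R+t)) (sq_nonneg a), sq_nonneg (a^2)]
    rw [he]
    calc 4*R*t/(((R-t)^2+a^2)*((R+t)^2+a^2)) ≤ 4*R*t/(R^4/4) :=
        div_le_div₀ (by positivity) le_rfl (by positivity) hden
      _ = 16*t/R^3 := by
          field_simp
          ring
  have hVle2 : V ≤ 4*π*t*R^2 := by
    have h5 : R^3 - (R-t)^3 ≤ 3*t*R^2 := by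
      nlinarith [mul_nonneg (sq_nonneg t) (show (0:ℝ) ≤ 3*R - t by linarith)]
    have h6 := mul_le_mul_of_nonneg_left h5 (show (0:ℝ) ≤ 4/3*π by positivity)
    have h7 : 4/3*π*(3*t*R^2) = 4*π*t*R^2 := by ring
    linarith
  rw [Real.norm_eq_abs]
  have hstep : (M - m0) * V ≤ (16*t/R^3) * (4*π*t*R^2) :=
    mul_le_mul hMm0 hVle2 hV0 (by positivity)
  have heq : (16*t/R^3) * (4*π*t*R^2) = 64*π*t^2/R := by
    field_simp
    ring
  linarith

/-- The large-momentum asymptotics underlying the Ter-Martirosyan–Skornyakov boundary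
condition: the truncated integral `∫_{|q| ≤ R} dq/(G(p,q)+λ)` grows like `4πR` with
finite remainder `−2π²√(ν|p|²+λ)`. -/
theorem tms_truncated_integral_asymptotics
    (m lam : ℝ) (hm : 0 < m) (hlam : 0 < lam) (p : E3) :
    Filter.Tendsto
      (fun R : ℝ =>
        (∫ q in Metric.closedBall (0 : E3) R, 1 / (Gker m p q + lam)) - 4 * Real.pi * R)
      Filter.atTop
      (nhds (-(2 * Real.pi ^ 2 * Real.sqrt (nu m * ‖p‖ ^ 2 + lam)))) := by
  have hnu : 0 < nu m := by
    unfold nu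
    apply div_pos (by nlinarith) (by positivity)
  have hpos : 0 < nu m * ‖p‖^2 + lam := by
    nlinarith [mul_nonneg hnu.le (sq_nonneg ‖p‖)]
  set a := Real.sqrt (nu m * ‖p‖^2 + lam) with hadef
  have ha : 0 < a := Real.sqrt_pos.mpr hpos
  have ha2 : a^2 = nu m * ‖p‖^2 + lam := Real.sq_sqrt hpos.le
  set c := ((mu m)/2) • p with hcdef
  have hm1 : m + 1 ≠ 0 := by positivity
  have hid : ∀ q : E3, Gker m p q + lam = ‖q + c‖^2 + a^2 := by
    intro q
    have h1 : ⟪q, c⟫ = (mu m)/2 * ⟪p, q⟫ := by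
      rw [hcdef, real_inner_smul_right, real_inner_comm]
    have h2 : ‖c‖^2 = ((mu m)/2)^2 * ‖p‖^2 := by
      rw [hcdef, norm_smul, mul_pow, Real.norm_eq_abs, sq_abs]
    rw [show Gker m p q = ‖p‖ ^ 2 + ‖q‖ ^ 2 + mu m * ⟪p, q⟫ from rfl,
      norm_add_sq_real, h1, h2, ha2]
    simp only [mu, nu]
    field_simp
    ring
  have hcongr : ∀ R : ℝ, (∫ q in Metric.closedBall (0:E3) R, 1/(Gker m p q + lam))
      = ∫ q in Metric.closedBall c R, 1/(‖q‖^2+a^2) := by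
    intro R
    rw [← trans_int (fun q => 1/(‖q‖^2+a^2)) c R]
    have : (fun q : E3 => 1/(Gker m p q + lam)) = fun q => 1/(‖q+c‖^2+a^2) :=
      funext fun q => by rw [hid q]
    rw [this]
  have harct : Tendsto (fun R : ℝ => Real.arctan (R/a)) atTop (nhds (π/2)) :=
    (Real.tendsto_arctan_atTop.mono_right nhdsWithin_le_nhds).comp
      (Tendsto.atTop_div_const ha tendsto_id)
  have h4 : Tendsto (fun R : ℝ =>
      (∫ q in Metric.closedBall (0:E3) R, 1/(‖q‖^2+a^2)) - 4*π*R)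
      atTop (nhds (-(2*π^2*a))) := by
    have heq : ∀ᶠ R : ℝ in atTop,
        (-(4*π*a)) * Real.arctan (R/a)
          = (∫ q in Metric.closedBall (0:E3) R, 1/(‖q‖^2+a^2)) - 4*π*R := by
      filter_upwards [eventually_ge_atTop (0:ℝ)] with R hR
      rw [radial_int a R ha hR]
      ring
    have hlim : Tendsto (fun R : ℝ => (-(4*π*a)) * Real.arctan (R/a))
        atTop (nhds (-(2*π^2*a))) := by
      have := harct.const_mul (-(4*π*a))
      convert this using 2
      ring
    exact hlim.congr' heq
  have hsum := (lune_tendsto a ha c).add h4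
  rw [zero_add] at hsum
  have hfinal : Tendsto (fun R : ℝ =>
      (∫ q in Metric.closedBall c R, 1/(‖q‖^2+a^2)) - 4*π*R)
      atTop (nhds (-(2*π^2*a))) := by
    apply hsum.congr
    intro R
    ring
  apply hfinal.congr
  intro R
  rw [hcongr R]
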